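/- Let C be a combinatorial class whose counting sequence is nondegenerate in the sense that there exist two distinct integers m ≠ n with c_m > 0 and c_n > 0, and suppose C(x) > 0 for all x ∈ (0,ρ). Then the expected-size function N(x) = x·C′(x)/C(x) is strictly increasing on (0,ρ); consequently, for every integer n the equation N(x) = n has at most one solution x ∈ (0,ρ). -/

import Mathlib

private lemma aux_sum_n {c : ℕ → ℕ} {ρ : ℝ}
    (hrad : ∀ y : ℝ, 0 ≤ y → y < ρ → Summable fun n : ℕ => (c n : ℝ) * y ^ n)
    {r : ℝ} (hr0 : 0 ≤ r) (hrρ : r < ρ) :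
    Summable fun n : ℕ => (n : ℝ) * (c n : ℝ) * r ^ n := by
  set r' : ℝ := (r + ρ) / 2 with hr'
  have hrr' : r < r' := by rw [hr']; linarith
  have hr'ρ : r' < ρ := by rw [hr']; linarith
  have hr'0 : 0 < r' := by linarith
  have hs : Summable fun n : ℕ => (c n : ℝ) * r' ^ n := hrad r' (by linarith) hr'ρ
  set B : ℝ := ∑' n : ℕ, (c n : ℝ) * r' ^ n with hB
  have hle : ∀ n : ℕ, (c n : ℝ) * r' ^ n ≤ B := fun n =>
    Summable.le_tsum hs n (fun j _ => by positivity)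
  set t : ℝ := r / r' with ht
  have ht0 : 0 ≤ t := by positivity
  have ht1 : t < 1 := by rw [ht, div_lt_one hr'0]; exact hrr'
  have hgeo : Summable fun n : ℕ => (n : ℝ) ^ 1 * t ^ n :=
    summable_pow_mul_geometric_of_norm_lt_one 1 (by rwa [Real.norm_eq_abs, abs_of_nonneg ht0])
  refine Summable.of_nonneg_of_le (fun n => by positivity) (fun n => ?_)
    ((hgeo.mul_left B))
  have hr : r = r' * t := by rw [ht, mul_div_assoc', mul_div_cancel_left₀ _ hr'0.ne']
  calc (n : ℝ) * (c n : ℝ) * r ^ n = ((c n : ℝ) * r' ^ n) * ((n : ℝ) * t ^ n) := by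
        rw [hr, mul_pow]; ring
    _ ≤ B * ((n : ℝ) ^ 1 * t ^ n) := by
        rw [pow_one]
        exact mul_le_mul_of_nonneg_right (hle n) (by positivity)

private lemma aux_sum_deriv {c : ℕ → ℕ} {ρ : ℝ}
    (hrad : ∀ y : ℝ, 0 ≤ y → y < ρ → Summable fun n : ℕ => (c n : ℝ) * y ^ n)
    {r : ℝ} (hr0 : 0 < r) (hrρ : r < ρ) :
    Summable fun n : ℕ => (n : ℝ) * (c n : ℝ) * r ^ (n - 1) := by
  have h := (aux_sum_n hrad hr0.le hrρ).div_const r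
  refine h.congr fun n => ?_
  cases n with
  | zero => simp
  | succ k => 
    simp only [Nat.add_sub_cancel]
    rw [pow_succ]
    field_simp

private lemma aux_sign {x₁ x₂ : ℝ} (h1 : 0 < x₁) (h12 : x₁ < x₂) {m n : ℕ} (hmn : m < n) :
    0 < ((n : ℝ) - (m : ℝ)) * (x₂ ^ n * x₁ ^ m - x₁ ^ n * x₂ ^ m) := by
  obtain ⟨k, rfl⟩ : ∃ k, n = m + (k + 1) := ⟨n - m - 1, by omega⟩
  have hp : x₁ ^ (k + 1) < x₂ ^ (k + 1) := pow_lt_pow_left₀ h12 h1.le (by omega)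
  have h1m : 0 < x₁ ^ m := pow_pos h1 m
  have h2m : 0 < x₂ ^ m := pow_pos (h1.trans h12) m
  have hrw : x₂ ^ (m + (k + 1)) * x₁ ^ m - x₁ ^ (m + (k + 1)) * x₂ ^ m
      = x₁ ^ m * x₂ ^ m * (x₂ ^ (k + 1) - x₁ ^ (k + 1)) := by
    rw [pow_add, pow_add]; ring
  rw [hrw]
  have hc : (0 : ℝ) < (↑(m + (k + 1)) : ℝ) - (m : ℝ) := by push_cast; linarith
  exact mul_pos hc (mul_pos (mul_pos h1m h2m) (by linarith))

private lemma aux_D {c : ℕ → ℕ} {ρ : ℝ}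
    (hrad : ∀ y : ℝ, 0 ≤ y → y < ρ → Summable fun n : ℕ => (c n : ℝ) * y ^ n)
    (hnd : ∃ m n : ℕ, m ≠ n ∧ 0 < c m ∧ 0 < c n)
    {x₁ x₂ : ℝ} (h1 : 0 < x₁) (h12 : x₁ < x₂) (h2 : x₂ < ρ) :
    (∑' n : ℕ, (n : ℝ) * (c n : ℝ) * x₁ ^ n) * (∑' n : ℕ, (c n : ℝ) * x₂ ^ n)
      < (∑' n : ℕ, (n : ℝ) * (c n : ℝ) * x₂ ^ n) * (∑' n : ℕ, (c n : ℝ) * x₁ ^ n) := by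
  have h02 : 0 < x₂ := h1.trans h12
  set F₁ : ℕ → ℝ := fun n => (c n : ℝ) * x₁ ^ n with hF₁
  set F₂ : ℕ → ℝ := fun n => (c n : ℝ) * x₂ ^ n with hF₂
  set G₁ : ℕ → ℝ := fun n => (n : ℝ) * (c n : ℝ) * x₁ ^ n with hG₁
  set G₂ : ℕ → ℝ := fun n => (n : ℝ) * (c n : ℝ) * x₂ ^ n with hG₂
  have sF₁ : Summable F₁ := hrad x₁ h1.le (h12.trans h2)
  have sF₂ : Summable F₂ := hrad x₂ h02.le h2
  have sG₁ : Summable G₁ := aux_sum_n hrad h1.le (h12.trans h2)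
  have sG₂ : Summable G₂ := aux_sum_n hrad h02.le h2
  have nF₁ : ∀ n, 0 ≤ F₁ n := fun n => by rw [hF₁]; positivity
  have nF₂ : ∀ n, 0 ≤ F₂ n := fun n => by rw [hF₂]; positivity
  have nG₁ : ∀ n, 0 ≤ G₁ n := fun n => by rw [hG₁]; positivity
  have nG₂ : ∀ n, 0 ≤ G₂ n := fun n => by rw [hG₂]; positivity
  have norm_of : ∀ (h : ℕ → ℝ), (∀ n, 0 ≤ h n) → Summable h → Summable fun n => ‖h n‖ :=
    fun h hn hs => hs.congr fun n => (Real.norm_of_nonneg (hn n)).symm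
  -- products as double sums
  have e1 : (∑' n, G₂ n) * (∑' n, F₁ n) = ∑' p : ℕ × ℕ, G₂ p.1 * F₁ p.2 :=
    tsum_mul_tsum_of_summable_norm (norm_of _ nG₂ sG₂) (norm_of _ nF₁ sF₁)
  have e2 : (∑' n, G₁ n) * (∑' n, F₂ n) = ∑' p : ℕ × ℕ, G₁ p.1 * F₂ p.2 :=
    tsum_mul_tsum_of_summable_norm (norm_of _ nG₁ sG₁) (norm_of _ nF₂ sF₂)
  have s1 : Summable fun p : ℕ × ℕ => G₂ p.1 * F₁ p.2 := sG₂.mul_of_nonneg sF₁ nG₂ nF₁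
  have s2 : Summable fun p : ℕ × ℕ => G₁ p.1 * F₂ p.2 := sG₁.mul_of_nonneg sF₂ nG₁ nF₂
  set T : ℕ × ℕ → ℝ := fun p => G₂ p.1 * F₁ p.2 - G₁ p.1 * F₂ p.2 with hT
  have sT : Summable T := s1.sub s2
  have sTsw : Summable fun p : ℕ × ℕ => T p.swap :=
    (Equiv.prodComm ℕ ℕ).summable_iff.mpr sT
  have hswap : (∑' p : ℕ × ℕ, T p.swap) = ∑' p : ℕ × ℕ, T p :=
    (Equiv.prodComm ℕ ℕ).tsum_eq T
  set S : ℕ × ℕ → ℝ := fun p => T p + T p.swap with hS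
  have sS : Summable S := sT.add sTsw
  have hSval : ∀ p : ℕ × ℕ, S p
      = (c p.1 : ℝ) * (c p.2 : ℝ)
        * (((p.1 : ℝ) - (p.2 : ℝ)) * (x₂ ^ p.1 * x₁ ^ p.2 - x₁ ^ p.1 * x₂ ^ p.2)) := by
    rintro ⟨m, n⟩
    simp only [hS, hT, hF₁, hF₂, hG₁, hG₂, Prod.swap]
    ring
  have hSnn : ∀ p : ℕ × ℕ, 0 ≤ S p := by
    rintro ⟨m, n⟩
    rw [hSval ⟨m, n⟩]
    rcases lt_trichotomy m n with h | h | h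
    · have := aux_sign h1 h12 h
      have hrw : ((m : ℝ) - (n : ℝ)) * (x₂ ^ m * x₁ ^ n - x₁ ^ m * x₂ ^ n)
          = ((n : ℝ) - (m : ℝ)) * (x₂ ^ n * x₁ ^ m - x₁ ^ n * x₂ ^ m) := by ring
      rw [hrw]; positivity
    · subst h; simp
    · have := aux_sign h1 h12 h
      positivity
  obtain ⟨m₀, n₀, hmn, hm, hn⟩ := hnd
  have hSpos : 0 < S (m₀, n₀) := by
    rw [hSval ⟨m₀, n₀⟩]
    have hcm : (0 : ℝ) < (c m₀ : ℝ) := by exact_mod_cast hm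
    have hcn : (0 : ℝ) < (c n₀ : ℝ) := by exact_mod_cast hn
    rcases lt_or_gt_of_ne hmn with h | h
    · have := aux_sign h1 h12 h
      have hrw : ((m₀ : ℝ) - (n₀ : ℝ)) * (x₂ ^ m₀ * x₁ ^ n₀ - x₁ ^ m₀ * x₂ ^ n₀)
          = ((n₀ : ℝ) - (m₀ : ℝ)) * (x₂ ^ n₀ * x₁ ^ m₀ - x₁ ^ n₀ * x₂ ^ m₀) := by ring
      rw [hrw]; positivity
    · have := aux_sign h1 h12 h
      positivity
  have htsumS : 0 < ∑' p, S p := Summable.tsum_pos sS hSnn (m₀, n₀) hSpos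
  have key : (∑' p : ℕ × ℕ, T p) + (∑' p : ℕ × ℕ, T p.swap) = ∑' p, S p :=
    (Summable.tsum_add sT sTsw).symm
  nlinarith [e1, e2, hswap, key, Summable.tsum_sub s1 s2, htsumS]

/-- If the counting sequence is nondegenerate (two distinct sizes
`m ≠ n` with `c m > 0` and `c n > 0`) and `C(x) > 0` on `(0, ρ)`, then the
expected-size function `N(x) = x * C'(x) / C(x)` is strictly increasing on
`(0, ρ)`; consequently, for every integer `n` the equation `N(x) = n` has at most
one solution in `(0, ρ)`. -/
theorem expected_size_strictMono
    (C : Type*) [Countable C] (size : C → ℕ)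
    (hfin : ∀ n : ℕ, {γ : C | size γ = n}.Finite)
    (c : ℕ → ℕ) (hc : ∀ n, c n = Nat.card {γ : C // size γ = n})
    (ρ : ℝ) (hρ : 0 < ρ)
    (hrad : ∀ y : ℝ, 0 ≤ y → y < ρ → Summable fun n : ℕ => (c n : ℝ) * y ^ n)
    (hnd : ∃ m n : ℕ, m ≠ n ∧ 0 < c m ∧ 0 < c n)
    (f : ℝ → ℝ) (hf : ∀ y : ℝ, f y = ∑' n : ℕ, (c n : ℝ) * y ^ n)
    (hpos : ∀ y ∈ Set.Ioo (0 : ℝ) ρ, 0 < f y)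
    (N : ℝ → ℝ) (hN : ∀ y : ℝ, N y = y * deriv f y / f y) :
    StrictMonoOn N (Set.Ioo (0 : ℝ) ρ) ∧
    ∀ (n : ℤ) (x₁ x₂ : ℝ), x₁ ∈ Set.Ioo (0 : ℝ) ρ → x₂ ∈ Set.Ioo (0 : ℝ) ρ →
      N x₁ = n → N x₂ = n → x₁ = x₂ := by
  have hfeq : f = fun z => ∑' n : ℕ, (c n : ℝ) * z ^ n := funext hf
  -- identify x * deriv f x with ∑' n, n * c n * x^n on (0, ρ)
  have hkey : ∀ x ∈ Set.Ioo (0 : ℝ) ρ,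
      x * deriv f x = ∑' n : ℕ, (n : ℝ) * (c n : ℝ) * x ^ n := by
    rintro x ⟨hx0, hxρ⟩
    set r : ℝ := (x + ρ) / 2 with hr
    have hxr : x < r := by rw [hr]; linarith
    have hrρ : r < ρ := by rw [hr]; linarith
    have hr0 : 0 < r := by linarith
    have hd : HasDerivAt f (∑' n : ℕ, (c n : ℝ) * ((n : ℝ) * x ^ (n - 1))) x := by
      rw [hfeq]
      apply hasDerivAt_tsum_of_isPreconnected (aux_sum_deriv hrad hr0 hrρ)
        (isOpen_Ioo (a := -r) (b := r)) (convex_Ioo _ _).isPreconnected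
        (g := fun n z => (c n : ℝ) * z ^ n)
        (fun n y _ => (hasDerivAt_pow n y).const_mul _)
        ?_ (y₀ := x) ⟨by linarith, hxr⟩ (hrad x hx0.le hxρ) ⟨by linarith, hxr⟩
      rintro n y ⟨hy1, hy2⟩
      have hyr : |y| ≤ r := by rw [abs_le]; constructor <;> linarith
      rw [Real.norm_eq_abs, abs_mul, abs_mul, Nat.abs_cast, Nat.abs_cast]
      have : |y ^ (n - 1)| ≤ r ^ (n - 1) := by
        rw [abs_pow]
        exact pow_le_pow_left₀ (abs_nonneg y) hyr _
      calc (c n : ℝ) * ((n : ℝ) * |y ^ (n - 1)|)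
          ≤ (c n : ℝ) * ((n : ℝ) * r ^ (n - 1)) := by
            apply mul_le_mul_of_nonneg_left _ (by positivity)
            exact mul_le_mul_of_nonneg_left this (by positivity)
        _ = (n : ℝ) * (c n : ℝ) * r ^ (n - 1) := by ring
    rw [hd.deriv, ← tsum_mul_left]
    refine tsum_congr fun n => ?_
    cases n with
    | zero => simp
    | succ k =>
      simp only [Nat.add_sub_cancel]
      push_cast
      rw [pow_succ]
      ring
  have hmono : StrictMonoOn N (Set.Ioo (0 : ℝ) ρ) := by
    intro a ha b hb hab
    rw [hN a, hN b, div_lt_div_iff₀ (hpos a ha) (hpos b hb), hkey a ha, hkey b hb,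
      hf a, hf b]
    exact aux_D hrad hnd ha.1 hab hb.2
  refine ⟨hmono, fun n x₁ x₂ h₁ h₂ e₁ e₂ => hmono.injOn h₁ h₂ (by rw [e₁, e₂])⟩
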